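/- arXiv:2204.14094 — 9 statements merged into one kernel-verified Lean document; each statement's English description precedes it below -/
import Mathlib

section
/- For a single-peaked preference profile with axis c_1 ▷ ... ▷ c_m, every candidate c_i experiences its worst pairwise defeat against one of its neighbours on the axis: there exists ℓ ∈ {i−1, i+1} (within bounds) such that pop(c_ℓ, c_i) ≥ pop(c_j, c_i) for all j ≠ i, where pop(a,b) is the number of voters preferring a to b minus the number preferring b to a. -/
open Finset

/-- A ranking over `m` candidates: `r c` is the position of candidate `c`
(position `0` = most preferred). -/
abbrev Ranking (m : ℕ) := Equiv.Perm (Fin m)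

/-- Voter with ranking `r` prefers `a` to `b`. -/
def Prefers {m : ℕ} (r : Ranking m) (a b : Fin m) : Prop := r a < r b

/-- A ranking is single-peaked w.r.t. the axis `c_0 ▷ c_1 ▷ ... ▷ c_{m-1}`. -/
def IsSinglePeaked {m : ℕ} (r : Ranking m) : Prop :=
  ∀ i j k : Fin m, i < j → j < k →
    (Prefers r i j → Prefers r j k) ∧ (Prefers r k j → Prefers r j i)

/-- A profile is single-peaked if all its rankings are. -/
def SPProfile {V : Type*} {m : ℕ} (P : V → Ranking m) : Prop :=
  ∀ v, IsSinglePeaked (P v)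

/-- Popularity margin of `a` over `b`. -/
noncomputable def pop {V : Type*} [Fintype V] {m : ℕ} (P : V → Ranking m)
    (a b : Fin m) : ℤ :=
  (Nat.card {v : V // Prefers (P v) a b} : ℤ) -
    (Nat.card {v : V // Prefers (P v) b a} : ℤ)

/-- Minimax Condorcet score of candidate `c`: worst defeat margin. -/
noncomputable def mmc {V : Type*} [Fintype V] {m : ℕ} (P : V → Ranking m)
    (c : Fin m) : WithBot ℤ :=
  (Finset.univ.erase c).sup (fun c' => ((pop P c' c : ℤ) : WithBot ℤ))

/-- Kendall's tau distance between two rankings. -/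
noncomputable def kt {m : ℕ} (r s : Ranking m) : ℕ :=
  Nat.card {p : Fin m × Fin m //
    p.1 < p.2 ∧ ¬ (Prefers r p.1 p.2 ↔ Prefers s p.1 p.2)}

/-- Kemeny score of ranking `r` w.r.t. profile `P`. -/
noncomputable def ktSum {V : Type*} [Fintype V] {m : ℕ} (r : Ranking m)
    (P : V → Ranking m) : ℕ :=
  ∑ v, kt r (P v)

/-- The peak (top candidate) of a ranking. -/
def peak {m : ℕ} (r : Ranking (m + 1)) : Fin (m + 1) := r.symm 0

lemma pop_le_of_imp {V : Type*} [Fintype V] {m : ℕ} (P : V → Ranking m)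
    {i j k : Fin m} (hij : j ≠ i)
    (h : ∀ v, Prefers (P v) j i → Prefers (P v) k i) :
    pop P j i ≤ pop P k i := by
  have h' : ∀ v, Prefers (P v) i k → Prefers (P v) i j := by
    intro v hv
    by_contra hc
    have hne : (P v) j ≠ (P v) i := fun he => hij (Equiv.injective _ he)
    have hji : Prefers (P v) j i :=
      lt_of_le_of_ne (not_lt.mp hc) hne
    exact absurd (h v hji) (fun hki => lt_asymm hv hki)
  have h1 : Nat.card {v : V // Prefers (P v) j i} ≤ Nat.card {v : V // Prefers (P v) k i} :=
    Nat.card_le_card_of_injective (fun x => ⟨x.1, h x.1 x.2⟩)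
      (by intro a b hab; cases a; cases b; simpa using hab)
  have h2 : Nat.card {v : V // Prefers (P v) i k} ≤ Nat.card {v : V // Prefers (P v) i j} :=
    Nat.card_le_card_of_injective (fun x => ⟨x.1, h' x.1 x.2⟩)
      (by intro a b hab; cases a; cases b; simpa using hab)
  simp only [pop]
  omega

/-- in a single-peaked profile every candidate experiences a worst
pairwise defeat against an axis-neighbour. -/
theorem stmt_2 {V : Type*} [Fintype V] {m : ℕ} (hm : 2 ≤ m)
    (P : V → Ranking m) (hsp : SPProfile P) :
    ∀ i : Fin m, ∃ ℓ : Fin m,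
      ((ℓ : ℕ) + 1 = (i : ℕ) ∨ (i : ℕ) + 1 = (ℓ : ℕ)) ∧
      ∀ j : Fin m, j ≠ i → pop P j i ≤ pop P ℓ i := by
  intro i
  have keyL : ∀ j k : Fin m, j < k → k < i →
      ∀ v, Prefers (P v) j i → Prefers (P v) k i := by
    intro j k hjk hki v hv
    by_cases h : Prefers (P v) j k
    · exact (hsp v j k i hjk hki).1 h
    · have hne : (P v) k ≠ (P v) j := fun he => hjk.ne' ((P v).injective he)
      exact lt_trans (lt_of_le_of_ne (not_lt.mp h) hne) hv
  have keyR : ∀ k j : Fin m, i < k → k < j →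
      ∀ v, Prefers (P v) j i → Prefers (P v) k i := by
    intro k j hik hkj v hv
    by_cases h : Prefers (P v) j k
    · exact (hsp v i k j hik hkj).2 h
    · have hne : (P v) k ≠ (P v) j := fun he => hkj.ne ((P v).injective he)
      exact lt_trans (lt_of_le_of_ne (not_lt.mp h) hne) hv
  -- domination by left neighbour
  have domL : ∀ (h1 : 1 ≤ (i : ℕ)) (j : Fin m), j < i →
      pop P j i ≤ pop P ⟨(i : ℕ) - 1, by omega⟩ i := by
    intro h1 j hj
    set ℓ : Fin m := ⟨(i : ℕ) - 1, by omega⟩ with hℓ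
    rcases eq_or_lt_of_le (show (j : ℕ) ≤ (ℓ : ℕ) by
      simp only [hℓ]; have := (Fin.lt_def.mp hj); omega) with he | hlt
    · have : j = ℓ := Fin.ext he
      simp [this]
    · exact pop_le_of_imp P hj.ne
        (keyL j ℓ (Fin.lt_def.mpr hlt) (Fin.lt_def.mpr (by simp [hℓ]; omega)))
  -- domination by right neighbour
  have domR : ∀ (h1 : (i : ℕ) + 1 < m) (j : Fin m), i < j →
      pop P j i ≤ pop P ⟨(i : ℕ) + 1, h1⟩ i := by
    intro h1 j hj
    set ℓ : Fin m := ⟨(i : ℕ) + 1, h1⟩ with hℓ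
    rcases eq_or_lt_of_le (show (ℓ : ℕ) ≤ (j : ℕ) by
      simp only [hℓ]; have := (Fin.lt_def.mp hj); omega) with he | hlt
    · have : j = ℓ := Fin.ext he.symm
      simp [this]
    · exact pop_le_of_imp P hj.ne'
        (keyR ℓ j (Fin.lt_def.mpr (by simp [hℓ])) (Fin.lt_def.mpr hlt))
  by_cases h0 : (i : ℕ) = 0
  · refine ⟨⟨1, by omega⟩, Or.inr (by simp [h0]), ?_⟩
    intro j hj
    have hij : i < j := Fin.lt_def.mpr (by
      have : (j : ℕ) ≠ (i : ℕ) := fun he => hj (Fin.ext he); omega)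
    have := domR (by omega) j hij
    convert this using 3
    omega
  · by_cases hm1 : (i : ℕ) + 1 = m
    · refine ⟨⟨(i : ℕ) - 1, by omega⟩, Or.inl (by simp; omega), ?_⟩
      intro j hj
      have hji : j < i := Fin.lt_def.mpr (by
        have h2 : (j : ℕ) ≠ (i : ℕ) := fun he => hj (Fin.ext he)
        have := j.isLt; omega)
      exact domL (by omega) j hji
    · -- interior: pick the larger of the two neighbours
      have hlt : (i : ℕ) + 1 < m := by omega
      set ℓL : Fin m := ⟨(i : ℕ) - 1, by omega⟩
      set ℓR : Fin m := ⟨(i : ℕ) + 1, hlt⟩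
      by_cases hc : pop P ℓL i ≤ pop P ℓR i
      · refine ⟨ℓR, Or.inr rfl, ?_⟩
        intro j hj
        rcases lt_or_gt_of_ne (fun he : j = i => hj he) with hji | hij
        · exact le_trans (domL (by omega) j hji) hc
        · exact domR hlt j hij
      · refine ⟨ℓL, Or.inl (by simp [ℓL]; omega), ?_⟩
        intro j hj
        rcases lt_or_gt_of_ne (fun he : j = i => hj he) with hji | hij
        · exact domL (by omega) j hji
        · exact le_trans (domR hlt j hij) (le_of_not_ge hc)
end

section
/- Every single-peaked preference profile admits a weak Condorcet winner, i.e., a candidate c such that for every other candidate c' the number of voters preferring c to c' is at least the number of voters preferring c' to c. -/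
open Finset

section aux
open Finset
variable {m : ℕ}

lemma r_peak_eq (r : Ranking (m+1)) : r (peak r) = 0 := r.apply_symm_apply 0

lemma r_ne_zero (r : Ranking (m+1)) {x : Fin (m+1)} (hx : x ≠ peak r) : r x ≠ 0 := by
  intro h
  apply hx
  have := congrArg r.symm h
  simpa [peak] using this

lemma pref_right (r : Ranking (m+1)) (h : IsSinglePeaked r) {a b : Fin (m+1)}
    (hpa : peak r ≤ a) (hab : a < b) : Prefers r a b := by
  rcases eq_or_lt_of_le hpa with he | hl
  · have ha : r a = 0 := he ▸ r_peak_eq r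
    have hb : r b ≠ 0 := r_ne_zero r (by rw [he]; exact (ne_of_gt hab))
    unfold Prefers
    rw [ha]
    exact Fin.pos_of_ne_zero hb
  · refine (h (peak r) a b hl hab).1 ?_
    unfold Prefers
    rw [r_peak_eq r]
    exact Fin.pos_of_ne_zero (r_ne_zero r (ne_of_gt hl))

lemma pref_left (r : Ranking (m+1)) (h : IsSinglePeaked r) {a b : Fin (m+1)}
    (hpb : b ≤ peak r) (hab : a < b) : Prefers r b a := by
  rcases eq_or_lt_of_le hpb with he | hl
  · have hb : r b = 0 := by rw [he]; exact r_peak_eq r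
    have ha : r a ≠ 0 := r_ne_zero r (by rw [← he]; exact (ne_of_lt hab))
    unfold Prefers
    rw [hb]
    exact Fin.pos_of_ne_zero ha
  · refine (h a b (peak r) hab hl).2 ?_
    unfold Prefers
    rw [r_peak_eq r]
    exact Fin.pos_of_ne_zero (r_ne_zero r (ne_of_lt hl))

lemma card_sub {V : Type*} [Fintype V] (p : V → Prop) [DecidablePred p] :
    Nat.card {v : V // p v} = (Finset.univ.filter p).card := by
  rw [Nat.card_eq_fintype_card, Fintype.card_subtype]

end aux

/-- every single-peaked profile admits a weak Condorcet winner. -/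
theorem stmt_5 {V : Type*} [Fintype V] {m : ℕ} (P : V → Ranking (m + 1))
    (hsp : SPProfile P) :
    ∃ c : Fin (m + 1), ∀ c' : Fin (m + 1), c' ≠ c →
      Nat.card {v : V // Prefers (P v) c' c} ≤ Nat.card {v : V // Prefers (P v) c c'} := by
  
  classical
  set n := Fintype.card V with hn
  set g : Fin (m+1) → ℕ := fun c => (Finset.univ.filter (fun v => peak (P v) ≤ c)).card with hg
  have hSne : (Finset.univ.filter (fun c : Fin (m+1) => n ≤ 2 * g c)).Nonempty := by
    refine ⟨Fin.last m, ?_⟩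
    simp only [mem_filter, mem_univ, true_and]
    have : g (Fin.last m) = n := by
      simp [hg, hn, Fin.le_last, Finset.filter_true_of_mem, Finset.card_univ]
    rw [this]; omega
  set c := (Finset.univ.filter (fun c : Fin (m+1) => n ≤ 2 * g c)).min' hSne with hc
  have hcS : n ≤ 2 * g c := by
    have := Finset.min'_mem _ hSne
    rw [← hc] at this
    exact (Finset.mem_filter.mp this).2
  have hcmin : ∀ d : Fin (m+1), d < c → 2 * g d < n := by
    intro d hd
    by_contra hcon
    push_neg at hcon
    have hdS : d ∈ Finset.univ.filter (fun c : Fin (m+1) => n ≤ 2 * g c) := by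
      simp only [mem_filter, mem_univ, true_and]; exact hcon
    exact absurd (Finset.min'_le _ _ hdS) (not_le.mpr hd)
  refine ⟨c, fun c' hne => ?_⟩
  rw [card_sub, card_sub]
  rcases lt_or_gt_of_ne hne with hlt | hgt
  · -- c' < c : voters with c ≤ peak prefer c to c'
    have hsub1 : ∀ v : V, Prefers (P v) c' c → peak (P v) < c := by
      intro v hp
      by_contra hcon
      push_neg at hcon
      have := pref_left (P v) (hsp v) hcon hlt
      exact absurd hp (by unfold Prefers at *; omega)
    have hsub2 : ∀ v : V, c ≤ peak (P v) → Prefers (P v) c c' := by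
      intro v hv
      exact pref_left (P v) (hsp v) hv hlt
    by_cases hc0 : c = 0
    · have : (Finset.univ.filter (fun v => Prefers (P v) c' c)).card = 0 := by
        rw [Finset.card_eq_zero, Finset.filter_eq_empty_iff]
        intro v _ hp
        exact absurd (hsub1 v hp) (by rw [hc0]; exact Fin.not_lt_zero _)
      rw [this]; exact Nat.zero_le _
    · have hcpos : 0 < c.val := by
        rcases Nat.eq_zero_or_pos c.val with h0 | h; · exact absurd (Fin.ext h0) hc0
        exact h
      set d : Fin (m+1) := ⟨c.val - 1, lt_of_le_of_lt (Nat.sub_le _ _) c.isLt⟩ with hd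
      have hdc : d < c := by
        simp only [Fin.lt_def, hd]; omega
      have hiff : ∀ x : Fin (m+1), x ≤ d ↔ x < c := by
        intro x
        simp only [Fin.le_def, Fin.lt_def, hd]
        omega
      have h1 : (Finset.univ.filter (fun v => Prefers (P v) c' c)).card ≤ g d := by
        apply Finset.card_le_card
        intro v hv
        rw [Finset.mem_filter] at *
        exact ⟨hv.1, (hiff _).mpr (hsub1 v hv.2)⟩
      have h2 : (Finset.univ.filter (fun v => c ≤ peak (P v))).card ≤
          (Finset.univ.filter (fun v => Prefers (P v) c c')).card := by
        apply Finset.card_le_card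
        intro v hv
        rw [Finset.mem_filter] at *
        exact ⟨hv.1, hsub2 v hv.2⟩
      have hpart : g d + (Finset.univ.filter (fun v => c ≤ peak (P v))).card = n := by
        rw [hg, hn]
        have : ∀ v : V, (c ≤ peak (P v)) ↔ ¬ (peak (P v) ≤ d) := by
          intro v
          rw [hiff]
          omega
        rw [Finset.filter_congr (fun v _ => this v)]
        exact Finset.card_filter_add_card_filter_not _
      have := hcmin d hdc
      omega
  · -- c < c' : voters with peak ≤ c prefer c to c'
    have hsub1 : ∀ v : V, Prefers (P v) c' c → ¬ (peak (P v) ≤ c) := by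
      intro v hp hcon
      have := pref_right (P v) (hsp v) hcon hgt
      exact absurd hp (by unfold Prefers at *; omega)
    have h1 : (Finset.univ.filter (fun v => Prefers (P v) c' c)).card ≤
        (Finset.univ.filter (fun v => ¬ (peak (P v) ≤ c))).card := by
      apply Finset.card_le_card
      intro v hv
      rw [Finset.mem_filter] at *
      exact ⟨hv.1, hsub1 v hv.2⟩
    have h2 : g c ≤ (Finset.univ.filter (fun v => Prefers (P v) c c')).card := by
      apply Finset.card_le_card
      intro v hv
      rw [Finset.mem_filter] at *
      exact ⟨hv.1, pref_right (P v) (hsp v) hv.2 hgt⟩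
    have hpart : g c + (Finset.univ.filter (fun v => ¬ (peak (P v) ≤ c))).card = n := by
      rw [hg, hn]
      exact Finset.card_filter_add_card_filter_not _
    omega
end

section
/- In a single-peaked preference profile, a median peak is a weak Condorcet winner: if candidate c_p is such that at least half of the voters have their peak at c_p or to the left of it on the axis, and at least half have their peak at c_p or to the right of it, then c_p weakly beats every other candidate in pairwise majority comparison. -/
open Finset

/-- in a single-peaked profile a median peak is a weak Condorcet
winner. -/
theorem stmt_6 {V : Type*} [Fintype V] {m : ℕ} (P : V → Ranking (m + 1))
    (hsp : SPProfile P) (p : Fin (m + 1))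
    (hleft : Fintype.card V ≤ 2 * Nat.card {v : V // peak (P v) ≤ p})
    (hright : Fintype.card V ≤ 2 * Nat.card {v : V // p ≤ peak (P v)}) :
    ∀ c' : Fin (m + 1), c' ≠ p →
      Nat.card {v : V // Prefers (P v) c' p} ≤ Nat.card {v : V // Prefers (P v) p c'} := by
  classical
  intro c' hc'
  -- completeness: c' ≻ p iff not p ≻ c'
  have htot : ∀ v : V, Prefers (P v) c' p ↔ ¬ Prefers (P v) p c' := by
    intro v
    unfold Prefers
    constructor
    · intro h h'
      exact absurd (h.trans h') (lt_irrefl _)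
    · intro h
      rcases lt_trichotomy ((P v) c') ((P v) p) with h1 | h1 | h1
      · exact h1
      · exact absurd ((P v).injective h1) hc'
      · exact absurd h1 h
  have hcompl :
      Nat.card {v : V // Prefers (P v) c' p} =
        Fintype.card V - Nat.card {v : V // Prefers (P v) p c'} := by
    rw [Nat.card_eq_fintype_card, Nat.card_eq_fintype_card]
    rw [Fintype.card_congr (Equiv.subtypeEquivRight htot)]
    exact Fintype.card_subtype_compl _
  suffices h : Fintype.card V ≤ 2 * Nat.card {v : V // Prefers (P v) p c'} by
    omega
  rcases lt_or_gt_of_ne hc' with hlt | hgt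
  · -- c' < p : everyone with peak ≥ p prefers p to c'
    have hsub : ∀ v : V, p ≤ peak (P v) → Prefers (P v) p c' := by
      intro v hv
      rcases eq_or_lt_of_le hv with heq | hpk
      · show (P v) p < (P v) c'
        have hp0 : (P v) p = 0 := by
          rw [heq]; simp [peak]
        rw [hp0]
        refine Fin.pos_of_ne_zero ?_
        intro h0
        apply hc'
        have := (P v).injective (h0.trans hp0.symm)
        exact this
      · refine (hsp v c' p (peak (P v)) hlt hpk).2 ?_
        show (P v) (peak (P v)) < (P v) p
        have h0 : (P v) (peak (P v)) = 0 := by simp [peak]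
        rw [h0]
        refine Fin.pos_of_ne_zero ?_
        intro hp0
        have : p = peak (P v) := (P v).injective (hp0.trans h0.symm)
        exact absurd this (ne_of_lt hpk)
    calc Fintype.card V ≤ 2 * Nat.card {v : V // p ≤ peak (P v)} := hright
      _ ≤ 2 * Nat.card {v : V // Prefers (P v) p c'} := by
          apply Nat.mul_le_mul_left
          rw [Nat.card_eq_fintype_card, Nat.card_eq_fintype_card]
          exact Fintype.card_subtype_mono _ _ hsub
  · -- p < c' : everyone with peak ≤ p prefers p to c'
    have hsub : ∀ v : V, peak (P v) ≤ p → Prefers (P v) p c' := by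
      intro v hv
      rcases eq_or_lt_of_le hv with heq | hpk
      · show (P v) p < (P v) c'
        have hp0 : (P v) p = 0 := by
          rw [← heq]; simp [peak]
        rw [hp0]
        refine Fin.pos_of_ne_zero ?_
        intro h0
        exact hc' ((P v).injective (h0.trans hp0.symm))
      · refine (hsp v (peak (P v)) p c' hpk hgt).1 ?_
        show (P v) (peak (P v)) < (P v) p
        have h0 : (P v) (peak (P v)) = 0 := by simp [peak]
        rw [h0]
        refine Fin.pos_of_ne_zero ?_
        intro hp0
        have : p = peak (P v) := (P v).injective (hp0.trans h0.symm)
        exact absurd this (ne_of_gt hpk)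
    calc Fintype.card V ≤ 2 * Nat.card {v : V // peak (P v) ≤ p} := hleft
      _ ≤ 2 * Nat.card {v : V // Prefers (P v) p c'} := by
          apply Nat.mul_le_mul_left
          rw [Nat.card_eq_fintype_card, Nat.card_eq_fintype_card]
          exact Fintype.card_subtype_mono _ _ hsub
end

section
/- Every nonempty single-peaked preference profile has at least one single-peaked Kemeny ranking: there exists a ranking r, single-peaked with respect to the same axis as the profile, that minimises the sum over all voters of the Kendall tau distance between r and the voter's ranking, among all rankings. -/
open Finset

namespace SPK
open Fin.NatCast
variable {V : Type*} [Fintype V] {m : ℕ}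
def AA (P : V → Ranking (m + 1)) (a b : Fin (m + 1)) : ℕ :=
  (Finset.univ.filter fun v => P v a < P v b).card

/-- interval of remaining candidates after `k` eliminations -/
def stp (P : V → Ranking (m + 1)) : ℕ → ℕ × ℕ
  | 0 => (0, m)
  | k + 1 =>
    if AA P ((stp P k).2 : Fin (m + 1)) ((stp P k).1 : Fin (m + 1)) ≤
        AA P ((stp P k).1 : Fin (m + 1)) ((stp P k).2 : Fin (m + 1)) then
      ((stp P k).1, (stp P k).2 - 1)
    else ((stp P k).1 + 1, (stp P k).2)

/-- candidate eliminated at step `k` (it gets position `m - k`) -/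
def elimc (P : V → Ranking (m + 1)) (k : ℕ) : ℕ :=
  if AA P ((stp P k).2 : Fin (m + 1)) ((stp P k).1 : Fin (m + 1)) ≤
      AA P ((stp P k).1 : Fin (m + 1)) ((stp P k).2 : Fin (m + 1)) then
    (stp P k).2
  else (stp P k).1

lemma stp_step (P : V → Ranking (m + 1)) (k : ℕ) :
    ((stp P (k + 1)).1 = (stp P k).1 ∧ (stp P (k + 1)).2 = (stp P k).2 - 1 ∧
      elimc P k = (stp P k).2) ∨
    ((stp P (k + 1)).1 = (stp P k).1 + 1 ∧ (stp P (k + 1)).2 = (stp P k).2 ∧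
      elimc P k = (stp P k).1) := by
  rw [stp, elimc]
  split
  · exact Or.inl ⟨rfl, rfl, rfl⟩
  · exact Or.inr ⟨rfl, rfl, rfl⟩

lemma stp_nested (P : V → Ranking (m + 1)) {k l : ℕ} (h : k ≤ l) :
    (stp P k).1 ≤ (stp P l).1 ∧ (stp P l).2 ≤ (stp P k).2 := by
  induction l with
  | zero => simp_all
  | succ l ih =>
    rcases Nat.eq_or_lt_of_le h with h' | h'
    · subst h'; exact ⟨le_rfl, le_rfl⟩
    · have hkl := ih (Nat.lt_succ_iff.mp h')
      rcases stp_step P l with ⟨h1, h2, _⟩ | ⟨h1, h2, _⟩ <;> omega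

lemma stp_len (P : V → Ranking (m + 1)) : ∀ k, k ≤ m →
    (stp P k).1 + (m - k) = (stp P k).2 := by
  intro k
  induction k with
  | zero => simp [stp]
  | succ k ih =>
    intro hk
    have h := ih (Nat.le_of_succ_le hk)
    rcases stp_step P k with ⟨h1, h2, _⟩ | ⟨h1, h2, _⟩ <;> omega

lemma stp_hi_le (P : V → Ranking (m + 1)) (k : ℕ) : (stp P k).2 ≤ m := by
  have := (stp_nested P (Nat.zero_le k)).2
  simpa [stp] using this

lemma elimc_or (P : V → Ranking (m + 1)) (k : ℕ) :
    elimc P k = (stp P k).1 ∨ elimc P k = (stp P k).2 := by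
  rw [elimc]; split
  · exact Or.inr rfl
  · exact Or.inl rfl

lemma elimc_mem (P : V → Ranking (m + 1)) {k : ℕ} (hk : k ≤ m) :
    (stp P k).1 ≤ elimc P k ∧ elimc P k ≤ (stp P k).2 := by
  have hl := stp_len P k hk
  rcases elimc_or P k with h | h <;> omega

lemma elimc_le (P : V → Ranking (m + 1)) {k : ℕ} (hk : k ≤ m) : elimc P k ≤ m :=
  le_trans (elimc_mem P hk).2 (stp_hi_le P k)

lemma elimc_not_mem (P : V → Ranking (m + 1)) {k l : ℕ} (hkl : k < l) (hl : l ≤ m) :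
    elimc P k < (stp P l).1 ∨ (stp P l).2 < elimc P k := by
  have hk : k < m := lt_of_lt_of_le hkl hl
  have hlen := stp_len P k (le_of_lt hk)
  have hnest := stp_nested P (Nat.succ_le_of_lt hkl)
  simp only [Nat.succ_eq_add_one] at hnest
  rcases stp_step P k with ⟨h1, h2, h3⟩ | ⟨h1, h2, h3⟩ <;> omega

lemma elimc_ne (P : V → Ranking (m + 1)) {k l : ℕ} (hkl : k < l) (hl : l ≤ m) :
    elimc P k ≠ elimc P l := by
  have h1 := elimc_mem P hl
  have h2 := elimc_not_mem P hkl hl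
  omega


lemma val_cast_of_le {x : ℕ} (hx : x ≤ m) : ((x : Fin (m + 1)) : ℕ) = x := by
  rw [Fin.val_natCast]
  exact Nat.mod_eq_of_lt (Nat.lt_succ_of_le hx)

/-- `g P j` = candidate at position `j` -/
noncomputable def g (P : V → Ranking (m + 1)) : Fin (m + 1) → Fin (m + 1) :=
  fun j => ((elimc P (m - j.val) : ℕ) : Fin (m + 1))

lemma g_inj (P : V → Ranking (m + 1)) : Function.Injective (g P) := by
  intro j j' h
  have hj : j.val ≤ m := Nat.lt_succ_iff.mp j.isLt
  have hj' : j'.val ≤ m := Nat.lt_succ_iff.mp j'.isLt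
  have h1 : elimc P (m - j.val) = elimc P (m - j'.val) := by
    have := congrArg Fin.val h
    rwa [g, g, val_cast_of_le (elimc_le P (Nat.sub_le m _)),
      val_cast_of_le (elimc_le P (Nat.sub_le m _))] at this
  by_contra hne
  have hne' : m - j.val ≠ m - j'.val := by
    intro he
    exact hne (Fin.ext (by omega))
  rcases Nat.lt_or_ge (m - j.val) (m - j'.val) with hlt | hge
  · exact elimc_ne P hlt (Nat.sub_le m _) h1
  · have hlt : m - j'.val < m - j.val := lt_of_le_of_ne hge (Ne.symm hne')
    exact elimc_ne P hlt (Nat.sub_le m _) h1.symm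

/-- the single-peaked Kemeny ranking -/
noncomputable def kem (P : V → Ranking (m + 1)) : Ranking (m + 1) :=
  (Equiv.ofBijective (g P) (Finite.injective_iff_bijective.mp (g_inj P))).symm

/-- elimination step of candidate `c` -/
noncomputable def stepc (P : V → Ranking (m + 1)) (c : Fin (m + 1)) : ℕ :=
  m - (kem P c).val

lemma stepc_le (P : V → Ranking (m + 1)) (c : Fin (m + 1)) : stepc P c ≤ m :=
  Nat.sub_le m _

lemma elimc_stepc (P : V → Ranking (m + 1)) (c : Fin (m + 1)) :
    elimc P (stepc P c) = c.val := by
  have hg : g P (kem P c) = c :=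
    Equiv.apply_symm_apply
      (Equiv.ofBijective (g P) (Finite.injective_iff_bijective.mp (g_inj P))) c
  have := congrArg Fin.val hg
  rwa [g, val_cast_of_le (elimc_le P (Nat.sub_le m _))] at this

lemma stepc_inj (P : V → Ranking (m + 1)) {a b : Fin (m + 1)} (h : a ≠ b) :
    stepc P a ≠ stepc P b := by
  intro he
  apply h
  apply Fin.ext
  rw [← elimc_stepc P a, ← elimc_stepc P b, he]

lemma prefers_kem_iff (P : V → Ranking (m + 1)) (a b : Fin (m + 1)) :
    Prefers (kem P) a b ↔ stepc P b < stepc P a := by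
  have ha : (kem P a).val ≤ m := Nat.lt_succ_iff.mp (kem P a).isLt
  have hb : (kem P b).val ≤ m := Nat.lt_succ_iff.mp (kem P b).isLt
  rw [Prefers, Fin.lt_def, stepc, stepc]
  omega

/-- middle candidate is never eliminated first -/
lemma stepc_middle (P : V → Ranking (m + 1)) {i j k : Fin (m + 1)}
    (hij : i < j) (hjk : j < k) :
    ¬ (stepc P j < stepc P i ∧ stepc P j < stepc P k) := by
  rintro ⟨h1, h2⟩
  have hi := elimc_stepc P i
  have hj := elimc_stepc P j
  have hk := elimc_stepc P k
  have hmi := elimc_mem P (stepc_le P i)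
  have hmk := elimc_mem P (stepc_le P k)
  have hni := stp_nested P (le_of_lt h1)
  have hnk := stp_nested P (le_of_lt h2)
  have hor := elimc_or P (stepc P j)
  have hij' : (i : ℕ) < (j : ℕ) := hij
  have hjk' : (j : ℕ) < (k : ℕ) := hjk
  omega

lemma kem_sp (P : V → Ranking (m + 1)) : IsSinglePeaked (kem P) := by
  intro i j k hij hjk
  have hmid := stepc_middle P hij hjk
  have hij' := stepc_inj P (ne_of_lt hij)
  have hjk' := stepc_inj P (ne_of_lt hjk)
  rw [prefers_kem_iff, prefers_kem_iff, prefers_kem_iff, prefers_kem_iff]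
  omega


lemma cast_lt_cast {x y : ℕ} (hy : y ≤ m) (hxy : x < y) :
    ((x : Fin (m + 1))) < ((y : Fin (m + 1))) := by
  rw [Fin.lt_def, val_cast_of_le (le_trans (le_of_lt hxy) hy), val_cast_of_le hy]
  exact hxy

lemma cast_ne_cast {x y : ℕ} (hx : x ≤ m) (hy : y ≤ m) (hxy : x ≠ y) :
    ((x : Fin (m + 1))) ≠ ((y : Fin (m + 1))) := by
  intro h
  apply hxy
  have := congrArg Fin.val h
  rwa [val_cast_of_le hx, val_cast_of_le hy] at this

lemma AA_compl (P : V → Ranking (m + 1)) {a b : Fin (m + 1)} (h : a ≠ b) :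
    AA P a b + AA P b a = Fintype.card V := by
  classical
  have key : ∀ v ∈ Finset.univ, (P v b < P v a) ↔ ¬ (P v a < P v b) := by
    intro v _
    have hne : P v a ≠ P v b := (P v).injective.ne h
    constructor
    · exact fun hv => not_lt.mpr hv.le
    · intro hv; exact lt_of_le_of_ne (not_lt.mp hv) hne.symm
  rw [AA, AA, Finset.filter_congr key,
    Finset.card_filter_add_card_filter_not, Finset.card_univ]

lemma AA_mono (P : V → Ranking (m + 1)) {a b c d : Fin (m + 1)}
    (h : ∀ v : V, P v a < P v b → P v c < P v d) : AA P a b ≤ AA P c d := by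
  apply Finset.card_le_card
  intro v hv
  simp only [Finset.mem_filter] at *
  exact ⟨hv.1, h v hv.2⟩

/-- the eliminated candidate is weakly beaten by every remaining candidate -/
lemma dominated (P : V → Ranking (m + 1)) (hsp : SPProfile P) {k c : ℕ}
    (hk : k ≤ m) (h1 : (stp P k).1 ≤ c) (h2 : c ≤ (stp P k).2)
    (hne : c ≠ elimc P k) :
    AA P ((elimc P k : ℕ) : Fin (m + 1)) ((c : ℕ) : Fin (m + 1)) ≤
      AA P ((c : ℕ) : Fin (m + 1)) ((elimc P k : ℕ) : Fin (m + 1)) := by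
  have hhim : (stp P k).2 ≤ m := stp_hi_le P k
  have hcm : c ≤ m := le_trans h2 hhim
  have hlom : (stp P k).1 ≤ m := le_trans (le_trans h1 h2) hhim
  have hlohi : (stp P k).1 < (stp P k).2 := by
    rcases elimc_or P k with h | h <;> omega
  have hNlh := AA_compl P (cast_ne_cast hlom hhim (by omega) :
    (((stp P k).1 : Fin (m + 1))) ≠ (((stp P k).2 : Fin (m + 1))))
  rw [elimc] at hne ⊢
  split at hne
  case isTrue hc =>
    rw [if_pos hc]
    rcases eq_or_lt_of_le h1 with hceq | hclt
    · rw [← hceq]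
      exact hc
    · have hch : c < (stp P k).2 := by omega
      have hmono : ∀ v : V,
          P v ((stp P k).2 : Fin (m + 1)) < P v (c : Fin (m + 1)) →
          P v ((stp P k).2 : Fin (m + 1)) < P v ((stp P k).1 : Fin (m + 1)) := by
        intro v hv
        have hspv := (hsp v ((stp P k).1 : Fin (m + 1)) (c : Fin (m + 1))
          ((stp P k).2 : Fin (m + 1))
          (cast_lt_cast hcm hclt) (cast_lt_cast hhim hch)).2 hv
        exact lt_trans hv hspv
      have hle := AA_mono P hmono
      have hNch := AA_compl P (cast_ne_cast hhim hcm (by omega) :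
        (((stp P k).2 : Fin (m + 1))) ≠ ((c : Fin (m + 1))))
      omega
  case isFalse hc =>
    rw [if_neg hc]
    rcases eq_or_lt_of_le h2 with hceq | hclt
    · rw [hceq]
      omega
    · have hcl : (stp P k).1 < c := by omega
      have hmono : ∀ v : V,
          P v ((stp P k).1 : Fin (m + 1)) < P v (c : Fin (m + 1)) →
          P v ((stp P k).1 : Fin (m + 1)) < P v ((stp P k).2 : Fin (m + 1)) := by
        intro v hv
        have hspv := (hsp v ((stp P k).1 : Fin (m + 1)) (c : Fin (m + 1))
          ((stp P k).2 : Fin (m + 1))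
          (cast_lt_cast hcm hcl) (cast_lt_cast hhim hclt)).1 hv
        exact lt_trans hv hspv
      have hle := AA_mono P hmono
      have hNcl := AA_compl P (cast_ne_cast hlom hcm (by omega) :
        (((stp P k).1 : Fin (m + 1))) ≠ ((c : Fin (m + 1))))
      omega

/-- the constructed ranking is weakly majority-consistent -/
lemma kem_orient (P : V → Ranking (m + 1)) (hsp : SPProfile P)
    {a b : Fin (m + 1)} (h : Prefers (kem P) a b) : AA P b a ≤ AA P a b := by
  have hba : stepc P b < stepc P a := (prefers_kem_iff P a b).1 h
  have hab : a ≠ b := by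
    intro he
    rw [he] at h
    exact lt_irrefl _ h
  have hea := elimc_stepc P a
  have heb := elimc_stepc P b
  have hma := elimc_mem P (stepc_le P a)
  have hnest := stp_nested P (le_of_lt hba)
  have hd := dominated P hsp (k := stepc P b) (c := a.val) (stepc_le P b)
    (by omega) (by omega)
    (by rw [heb]; exact fun he => hab (Fin.ext he))
  rwa [heb, Fin.cast_val_eq_self, Fin.cast_val_eq_self] at hd


lemma ktSum_eq (r : Ranking (m + 1)) (P : V → Ranking (m + 1)) :
    ktSum r P = ∑ p ∈ Finset.univ.filter
      (fun p : Fin (m + 1) × Fin (m + 1) => p.1 < p.2),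
      (if r p.1 < r p.2 then AA P p.2 p.1 else AA P p.1 p.2) := by
  classical
  unfold ktSum kt
  simp only [Prefers]
  have hcard : ∀ v : V, Nat.card {p : Fin (m + 1) × Fin (m + 1) //
      p.1 < p.2 ∧ ¬ (r p.1 < r p.2 ↔ P v p.1 < P v p.2)} =
      ∑ p : Fin (m + 1) × Fin (m + 1),
        (if p.1 < p.2 ∧ ¬ (r p.1 < r p.2 ↔ P v p.1 < P v p.2) then 1 else 0) := by
    intro v
    rw [Nat.card_eq_fintype_card, Fintype.card_subtype, Finset.card_filter]
  simp only [hcard]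
  rw [Finset.sum_comm, Finset.sum_filter]
  apply Finset.sum_congr rfl
  intro p _
  by_cases hlt : p.1 < p.2
  · have hne : p.1 ≠ p.2 := ne_of_lt hlt
    simp only [hlt, if_true, true_and]
    by_cases hr : r p.1 < r p.2
    · have heq : ∀ v : V, (¬ (r p.1 < r p.2 ↔ P v p.1 < P v p.2)) ↔
          P v p.2 < P v p.1 := by
        intro v
        have hpne : P v p.1 ≠ P v p.2 := (P v).injective.ne hne
        constructor
        · intro hv
          have : ¬ P v p.1 < P v p.2 := fun hh => hv ⟨fun _ => hh, fun _ => hr⟩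
          exact lt_of_le_of_ne (not_lt.mp this) hpne.symm
        · intro hv hiff
          exact absurd (hiff.mp hr) (not_lt.mpr hv.le)
      rw [if_pos hr, AA, Finset.card_filter]
      exact Finset.sum_congr rfl fun v _ => if_congr (heq v) rfl rfl
    · have heq : ∀ v : V, (¬ (r p.1 < r p.2 ↔ P v p.1 < P v p.2)) ↔
          P v p.1 < P v p.2 := by
        intro v
        constructor
        · intro hv
          by_contra hh
          exact hv ⟨fun h1 => absurd h1 hr, fun h2 => absurd h2 hh⟩
        · intro hv hiff
          exact hr (hiff.mpr hv)
      rw [if_neg hr, AA, Finset.card_filter]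
      exact Finset.sum_congr rfl fun v _ => if_congr (heq v) rfl rfl
  · simp [hlt]

lemma kem_optimal (P : V → Ranking (m + 1)) (hsp : SPProfile P)
    (s : Ranking (m + 1)) : ktSum (kem P) P ≤ ktSum s P := by
  classical
  rw [ktSum_eq, ktSum_eq]
  apply Finset.sum_le_sum
  intro p hp
  have hlt : p.1 < p.2 := (Finset.mem_filter.mp hp).2
  have hne : p.1 ≠ p.2 := ne_of_lt hlt
  have hmin : min (AA P p.1 p.2) (AA P p.2 p.1) ≤
      (if s p.1 < s p.2 then AA P p.2 p.1 else AA P p.1 p.2) := by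
    split
    · exact min_le_right _ _
    · exact min_le_left _ _
  refine le_trans ?_ hmin
  by_cases h : kem P p.1 < kem P p.2
  · rw [if_pos h]
    exact le_min (kem_orient P hsp h) le_rfl
  · rw [if_neg h]
    have h' : kem P p.2 < kem P p.1 := by
      have hpne : kem P p.1 ≠ kem P p.2 := (kem P).injective.ne hne
      exact lt_of_le_of_ne (not_lt.mp h) hpne.symm
    exact le_min le_rfl (kem_orient P hsp h')

end SPK

/-- every nonempty single-peaked profile has a single-peaked Kemeny
ranking. -/
theorem stmt_7 {V : Type*} [Fintype V] [Nonempty V] {m : ℕ}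
    (P : V → Ranking (m + 1)) (hsp : SPProfile P) :
    ∃ r : Ranking (m + 1), IsSinglePeaked r ∧
      ∀ s : Ranking (m + 1), ktSum r P ≤ ktSum s P :=
  ⟨SPK.kem P, SPK.kem_sp P, SPK.kem_optimal P hsp⟩
end

section
/- In a single-peaked profile, every Kemeny ranking places a weak Condorcet loser last: if candidate c is weakly beaten by every other candidate in pairwise majority comparison, then appending c at the bottom of any Kemeny ranking of the profile with c removed yields a Kemeny ranking of the full profile. -/
open Finset

noncomputable def disag {α : Type*} (r s : α → α → Prop) : ℕ :=
  Nat.card {p : α × α // r p.1 p.2 ∧ s p.2 p.1}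

lemma sum_disag {V α : Type*} [Fintype V] [Fintype α] (t : α → α → Prop)
    [∀ x y, Decidable (t x y)] (P : V → α → α → Prop) :
    ∑ v : V, disag t (P v) =
      ∑ x : α, ∑ y : α, if t x y then Nat.card {v : V // P v y x} else 0 := by
  classical
  calc ∑ v : V, disag t (P v)
      = ∑ v : V, ∑ x : α, ∑ y : α, if t x y ∧ P v y x then 1 else 0 := by
        refine Finset.sum_congr rfl fun v _ => ?_
        rw [disag, Nat.card_eq_fintype_card, Fintype.card_subtype, Finset.card_filter,
          Fintype.sum_prod_type]
    _ = ∑ x : α, ∑ y : α, ∑ v : V, if t x y ∧ P v y x then 1 else 0 := by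
        rw [Finset.sum_comm]
        exact Finset.sum_congr rfl fun x _ => Finset.sum_comm
    _ = ∑ x : α, ∑ y : α, if t x y then Nat.card {v : V // P v y x} else 0 := by
        refine Finset.sum_congr rfl fun x _ => Finset.sum_congr rfl fun y _ => ?_
        by_cases h : t x y
        · simp only [h, true_and, if_true]
          rw [Nat.card_eq_fintype_card, Fintype.card_subtype, Finset.card_filter]
        · simp [h]

lemma split_sum {α : Type*} [Fintype α] [DecidableEq α] (c : α) (t : α → α → Prop)
    [∀ x y, Decidable (t x y)] (ht : ¬ t c c)
    (N : α → α → ℕ) :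
    (∑ x : α, ∑ y : α, if t x y then N x y else 0)
    = (∑ y : {x : α // x ≠ c}, if t c y.1 then N c y.1 else 0)
    + ((∑ x : {x : α // x ≠ c}, if t x.1 c then N x.1 c else 0)
    + (∑ x : {x : α // x ≠ c}, ∑ y : {x : α // x ≠ c},
        if t x.1 y.1 then N x.1 y.1 else 0)) := by
  classical
  have hsub : ∀ (f : α → ℕ), ∑ x : α, f x = f c + ∑ x : {x : α // x ≠ c}, f x.1 := by
    intro f
    rw [Fintype.sum_eq_add_sum_compl c f]
    congr 1
    exact Finset.sum_subtype _ (by simp) f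
  rw [hsub (fun x => ∑ y : α, if t x y then N x y else 0)]
  rw [hsub (fun y => if t c y then N c y else 0), if_neg ht, zero_add]
  congr 1
  have : ∀ x : {x : α // x ≠ c},
      (∑ y : α, if t x.1 y then N x.1 y else 0)
      = (if t x.1 c then N x.1 c else 0)
      + ∑ y : {x : α // x ≠ c}, if t x.1 y.1 then N x.1 y.1 else 0 :=
    fun x => hsub (fun y => if t x.1 y then N x.1 y else 0)
  rw [Finset.sum_congr rfl fun x _ => this x, Finset.sum_add_distrib]
/-- in a single-peaked profile, appending a weak Condorcet loser `c`
at the bottom of any Kemeny ranking of the profile with `c` removed yields a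
Kemeny ranking of the full profile. -/
theorem stmt_8 {V : Type*} [Fintype V] {m : ℕ}
    (P : V → Fin m → Fin m → Prop)
    (hto : ∀ v, IsStrictTotalOrder (Fin m) (P v))
    (hsp : ∀ v, ∀ i j k : Fin m, i < j → j < k →
      (P v i j → P v j k) ∧ (P v k j → P v j i))
    (c : Fin m)
    (hloser : ∀ c' : Fin m, c' ≠ c →
      Nat.card {v : V // P v c c'} ≤ Nat.card {v : V // P v c' c})
    (r : {x : Fin m // x ≠ c} → {x : Fin m // x ≠ c} → Prop)
    (hr : IsStrictTotalOrder _ r)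
    (hkem : ∀ s : {x : Fin m // x ≠ c} → {x : Fin m // x ≠ c} → Prop,
      IsStrictTotalOrder _ s →
      ∑ v : V, disag r (fun a b => P v a.1 b.1) ≤
        ∑ v : V, disag s (fun a b => P v a.1 b.1)) :
    -- the extension of `r` by placing `c` last
    IsStrictTotalOrder (Fin m)
      (fun x y => (x ≠ c ∧ y = c) ∨ ∃ (hx : x ≠ c) (hy : y ≠ c), r ⟨x, hx⟩ ⟨y, hy⟩) ∧
    ∀ s : Fin m → Fin m → Prop, IsStrictTotalOrder (Fin m) s →
      ∑ v : V, disag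
          (fun x y => (x ≠ c ∧ y = c) ∨ ∃ (hx : x ≠ c) (hy : y ≠ c), r ⟨x, hx⟩ ⟨y, hy⟩)
          (P v) ≤
        ∑ v : V, disag s (P v) := by
  classical
  set E : Fin m → Fin m → Prop :=
    fun x y => (x ≠ c ∧ y = c) ∨ ∃ (hx : x ≠ c) (hy : y ≠ c), r ⟨x, hx⟩ ⟨y, hy⟩ with hE
  have hEcc : ∀ y, ¬ E c y := by
    rintro y (⟨h, _⟩ | ⟨h, _, _⟩) <;> exact h rfl
  have hExc : ∀ x : Fin m, x ≠ c → E x c := fun x hx => Or.inl ⟨hx, rfl⟩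
  have hErest : ∀ (x y : {x : Fin m // x ≠ c}), E x.1 y.1 ↔ r x y := by
    rintro ⟨x, hx⟩ ⟨y, hy⟩
    constructor
    · rintro (⟨_, h⟩ | ⟨_, _, h⟩)
      · exact absurd h hy
      · exact h
    · intro h; exact Or.inr ⟨hx, hy, h⟩
  have hEsto : IsStrictTotalOrder (Fin m) E := by
    refine { trichotomous := ?_, irrefl := ?_, trans := ?_ }
    · -- trichotomous
      intro x y
      suffices h : E x y ∨ x = y ∨ E y x from fun h1 h2 => h.elim (fun h => absurd h h1) (fun h => h.elim id (fun h => absurd h h2))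
      by_cases hx : x = c <;> by_cases hy : y = c
      · exact Or.inr (Or.inl (hx.trans hy.symm))
      · exact Or.inr (Or.inr (Or.inl ⟨hy, hx⟩))
      · exact Or.inl (Or.inl ⟨hx, hy⟩)
      · rcases @trichotomous _ _ hr.toTrichotomous ⟨x, hx⟩ ⟨y, hy⟩ with h | h | h
        · exact Or.inl (Or.inr ⟨hx, hy, h⟩)
        · exact Or.inr (Or.inl (congrArg Subtype.val h))
        · exact Or.inr (Or.inr (Or.inr ⟨hy, hx, h⟩))
    · -- irrefl
      rintro x (⟨hx, hc⟩ | ⟨hx, hy, h⟩)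
      · exact hx hc
      · exact hr.irrefl _ h
    · -- trans
      rintro x y z (⟨hx, hyc⟩ | ⟨hx, hy, h1⟩) h2
      · rcases h2 with ⟨hy', _⟩ | ⟨hy', _, _⟩ <;> exact absurd hyc hy'
      · rcases h2 with ⟨_, hzc⟩ | ⟨_, hz, h2'⟩
        · exact Or.inl ⟨hx, hzc⟩
        · exact Or.inr ⟨hx, hz, hr.trans _ _ _ h1 h2'⟩
  refine ⟨hEsto, fun s hs => ?_⟩
  set N : Fin m → Fin m → ℕ := fun x y => Nat.card {v : V // P v y x} with hN
  have hs' : IsStrictTotalOrder {x : Fin m // x ≠ c} (fun a b => s a.1 b.1) := by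
    refine { trichotomous := ?_, irrefl := ?_, trans := ?_ }
    · intro a b
      suffices h : (fun a b : {x : Fin m // x ≠ c} => s a.1 b.1) a b ∨ a = b ∨ (fun a b : {x : Fin m // x ≠ c} => s a.1 b.1) b a from fun h1 h2 => h.elim (fun h => absurd h h1) (fun h => h.elim id (fun h => absurd h h2))
      rcases @trichotomous _ _ hs.toTrichotomous a.1 b.1 with h | h | h
      · exact Or.inl h
      · exact Or.inr (Or.inl (Subtype.ext h))
      · exact Or.inr (Or.inr h)
    · exact fun a => hs.irrefl a.1
    · exact fun a b d => hs.trans a.1 b.1 d.1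
  rw [sum_disag E P, sum_disag s P,
    split_sum c E (hEcc c) N, split_sum c s (hs.irrefl c) N]
  have h1 : (∑ y : {x : Fin m // x ≠ c}, if E c y.1 then N c y.1 else 0) = 0 := by
    simp [hEcc]
  have h2 : (∑ x : {x : Fin m // x ≠ c}, if E x.1 c then N x.1 c else 0)
      = ∑ x : {x : Fin m // x ≠ c}, N x.1 c := by
    exact Finset.sum_congr rfl fun x _ => if_pos (hExc x.1 x.2)
  rw [h1, h2, zero_add]
  have hc_part : (∑ x : {x : Fin m // x ≠ c}, N x.1 c)
      ≤ (∑ y : {x : Fin m // x ≠ c}, if s c y.1 then N c y.1 else 0)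
      + (∑ x : {x : Fin m // x ≠ c}, if s x.1 c then N x.1 c else 0) := by
    rw [← Finset.sum_add_distrib]
    refine Finset.sum_le_sum fun x _ => ?_
    rcases @trichotomous _ _ hs.toTrichotomous x.1 c with h | h | h
    · rw [if_pos h]
      exact le_add_self
    · exact absurd h x.2
    · rw [if_pos h, if_neg (fun h' => hs.irrefl x.1 (hs.trans x.1 c x.1 h' h)), add_zero]
      exact hloser x.1 x.2
  have hrest : (∑ x : {x : Fin m // x ≠ c}, ∑ y : {x : Fin m // x ≠ c},
        if E x.1 y.1 then N x.1 y.1 else 0)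
      ≤ ∑ x : {x : Fin m // x ≠ c}, ∑ y : {x : Fin m // x ≠ c},
        if s x.1 y.1 then N x.1 y.1 else 0 := by
    have e1 : (∑ x : {x : Fin m // x ≠ c}, ∑ y : {x : Fin m // x ≠ c},
          if E x.1 y.1 then N x.1 y.1 else 0)
        = ∑ v : V, disag r (fun (a b : {x : Fin m // x ≠ c}) => P v a.1 b.1) := by
      rw [sum_disag (V := V) r (P := fun v a b => P v a.1 b.1)]
      exact Finset.sum_congr rfl fun x _ => Finset.sum_congr rfl fun y _ => by
        rw [if_congr (hErest x y) rfl rfl]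
    have e2 : (∑ x : {x : Fin m // x ≠ c}, ∑ y : {x : Fin m // x ≠ c},
          if s x.1 y.1 then N x.1 y.1 else 0)
        = ∑ v : V, disag (fun (a b : {x : Fin m // x ≠ c}) => s a.1 b.1)
          (fun (a b : {x : Fin m // x ≠ c}) => P v a.1 b.1) := by
      rw [sum_disag (V := V) (fun (a b : {x : Fin m // x ≠ c}) => s a.1 b.1)
        (P := fun v a b => P v a.1 b.1)]
    rw [e1, e2]
    exact hkem _ hs'
  have := Nat.add_le_add hc_part hrest
  omega
end

section
/- There exists a single-peaked preference profile over 4 candidates (namely one voter with a ≻ b ≻ c ≻ d and two voters with b ≻ c ≻ d ≻ a, single-peaked on the axis a ▷ b ▷ c ▷ d) in which candidate a is the strict Condorcet loser, yet no Minimax Condorcet ranking places a last: both c and d have strictly greater Minimax score than a. -/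
open Finset

/-- The ranking b ≻ c ≻ d ≻ a over candidates a = 0, b = 1, c = 2, d = 3. -/
def bcda : Ranking 4 := ⟨![3, 0, 1, 2], ![1, 2, 3, 0], by decide, by decide⟩

/-- The profile of one voter with a ≻ b ≻ c ≻ d and two voters with
b ≻ c ≻ d ≻ a. -/
def P9 : Fin 3 → Ranking 4 := ![Equiv.refl (Fin 4), bcda, bcda]


lemma pop_val (a b : Fin 4) : pop P9 a b =
    ((univ.filter fun v => (P9 v) a < (P9 v) b).card : ℤ) -
    ((univ.filter fun v => (P9 v) b < (P9 v) a).card : ℤ) := by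
  simp [pop, Prefers, Nat.card_eq_fintype_card, Fintype.card_subtype]

lemma pop_num : pop P9 1 0 = 1 ∧ pop P9 2 0 = 1 ∧ pop P9 3 0 = 1 ∧
    pop P9 0 2 = -1 ∧ pop P9 1 2 = 3 ∧ pop P9 3 2 = -3 ∧
    pop P9 0 3 = -1 ∧ pop P9 1 3 = 3 ∧ pop P9 2 3 = 3 := by
  refine ⟨?_,?_,?_,?_,?_,?_,?_,?_,?_⟩ <;> rw [pop_val] <;> decide

lemma erase0 : (univ.erase (0 : Fin 4)) = {1,2,3} := by decide
lemma erase2 : (univ.erase (2 : Fin 4)) = {0,1,3} := by decide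
lemma erase3 : (univ.erase (3 : Fin 4)) = {0,1,2} := by decide

lemma mmc0 : mmc P9 0 = (1 : ℤ) := by
  rw [mmc, erase0]
  simp [pop_num.1, pop_num.2.1, pop_num.2.2.1]

lemma mmc2 : mmc P9 2 = (3 : ℤ) := by
  rw [mmc, erase2]
  simp only [sup_insert, sup_singleton, pop_num.2.2.2.1, pop_num.2.2.2.2.1, pop_num.2.2.2.2.2.1]
  rw [← WithBot.coe_sup, ← WithBot.coe_sup, WithBot.coe_inj]; norm_num

lemma mmc3 : mmc P9 3 = (3 : ℤ) := by
  rw [mmc, erase3]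
  simp only [sup_insert, sup_singleton, pop_num.2.2.2.2.2.2.1, pop_num.2.2.2.2.2.2.2.1, pop_num.2.2.2.2.2.2.2.2]
  rw [← WithBot.coe_sup, ← WithBot.coe_sup, WithBot.coe_inj]; norm_num

/-- in this single-peaked profile, `a` is the strict Condorcet
loser, yet both `c` and `d` have strictly greater Minimax Condorcet score
than `a`, so no MMC ranking places `a` last. -/
theorem stmt_9 :
    SPProfile P9 ∧
    (∀ c' : Fin 4, c' ≠ 0 → 0 < pop P9 c' 0) ∧
    mmc P9 0 < mmc P9 2 ∧ mmc P9 0 < mmc P9 3 ∧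
    ∀ r : Ranking 4,
      (∀ a b : Fin 4, r a ≤ r b → mmc P9 a ≤ mmc P9 b) →
      r.symm (Fin.last 3) ≠ 0 := by
  refine ⟨?_, ?_, ?_, ?_, ?_⟩
  · intro v i j k hij hjk
    fin_cases v <;> simp only [P9, Prefers, bcda] <;>
      fin_cases i <;> fin_cases j <;> fin_cases k <;> simp_all
  · intro c' hc'
    fin_cases c'
    · exact absurd rfl hc'
    · show 0 < pop P9 1 0; rw [pop_num.1]; norm_num
    · show 0 < pop P9 2 0; rw [pop_num.2.1]; norm_num
    · show 0 < pop P9 3 0; rw [pop_num.2.2.1]; norm_num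
  · rw [mmc0, mmc2]; exact_mod_cast (by norm_num : (1:ℤ) < 3)
  · rw [mmc0, mmc3]; exact_mod_cast (by norm_num : (1:ℤ) < 3)
  · intro r hmon hcon
    have h0 : r 0 = Fin.last 3 := by
      rw [← hcon]; exact r.apply_symm_apply _
    have h := hmon 2 0 (h0 ▸ Fin.le_last _)
    rw [mmc0, mmc2] at h
    exact absurd h (by exact_mod_cast (by norm_num : ¬ (3:ℤ) ≤ 1))
end

section
/- For any single-peaked profile, the candidates with minimal Minimax Condorcet score are exactly the weak Condorcet winners; in particular a candidate has MMC score ≤ 0 if and only if it is a weak Condorcet winner, and such a candidate exists. -/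
open Finset

lemma pref_peak {m : ℕ} (r : Ranking (m+1)) {c : Fin (m+1)} (hc : c ≠ peak r) :
    Prefers r (peak r) c := by
  have h0 : r (peak r) = 0 := r.apply_symm_apply 0
  have hne : r c ≠ 0 := fun h => hc (r.injective (h.trans h0.symm))
  unfold Prefers
  rw [h0]
  exact Fin.pos_iff_ne_zero.mpr hne

lemma sp_pref_right {m : ℕ} {r : Ranking (m+1)} (h : IsSinglePeaked r) {c c' : Fin (m+1)}
    (hp : peak r ≤ c) (hcc : c < c') : Prefers r c c' := by
  rcases eq_or_lt_of_le hp with he | hl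
  · rw [← he]; exact pref_peak r (he ▸ hcc).ne'
  · exact (h _ _ _ hl hcc).1 (pref_peak r hl.ne')

lemma sp_pref_left {m : ℕ} {r : Ranking (m+1)} (h : IsSinglePeaked r) {c c' : Fin (m+1)}
    (hp : c ≤ peak r) (hcc : c' < c) : Prefers r c c' := by
  rcases eq_or_lt_of_le hp with he | hl
  · rw [he]; exact pref_peak r (by rw [← he]; exact hcc.ne)
  · exact (h c' c (peak r) hcc hl).2 (pref_peak r hl.ne)

lemma exists_weakCW {V : Type*} [Fintype V] {m : ℕ} (P : V → Ranking (m + 1))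
    (hsp : SPProfile P) :
    ∃ c : Fin (m + 1), ∀ c' : Fin (m + 1), c' ≠ c → pop P c' c ≤ 0 := by
  classical
  set n := Fintype.card V with hn
  set countLe : Fin (m+1) → ℕ :=
    fun c => (univ.filter (fun v => peak (P v) ≤ c)).card with hcountLe
  set S : Finset (Fin (m+1)) := univ.filter (fun c => n ≤ 2 * countLe c) with hS
  have hSne : S.Nonempty := by
    refine ⟨Fin.last m, ?_⟩
    have huniv : (univ.filter (fun v => peak (P v) ≤ Fin.last m)) = (univ : Finset V) := by
      simp [Fin.le_last]
    simp only [hS, mem_filter, mem_univ, true_and, hcountLe, huniv, card_univ]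
    omega
  set c := S.min' hSne with hc
  have hc1 : n ≤ 2 * countLe c := (mem_filter.mp (S.min'_mem hSne)).2
  -- number with peak < c vs peak ≥ c
  have hsplit : (univ.filter fun v => peak (P v) < c).card
      + (univ.filter fun v => c ≤ peak (P v)).card = n := by
    have h := Finset.card_filter_add_card_filter_not
      (s := (univ : Finset V)) (p := fun v => peak (P v) < c)
    simpa [not_lt, Finset.card_univ] using h
  have hc2 : n ≤ 2 * (univ.filter fun v => c ≤ peak (P v)).card := by
    by_cases h0 : c = 0
    · have : (univ.filter fun v => peak (P v) < c) = (∅ : Finset V) := by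
        rw [h0]; simp
      rw [this] at hsplit
      simp at hsplit
      omega
    · have hpos : 0 < c.val := by
        rcases Nat.eq_zero_or_pos c.val with h | h
        · exact absurd (Fin.ext h) h0
        · exact h
      set b : Fin (m+1) := ⟨c.val - 1, by omega⟩ with hb
      have hbc : b < c := by
        rw [Fin.lt_def]; show c.val - 1 < c.val; omega
      have hbS : b ∉ S := by
        intro hmem
        have := S.min'_le b hmem
        rw [← hc] at this
        exact absurd hbc (not_lt.mpr this)
      have hblt : ¬ (n ≤ 2 * countLe b) := by
        intro h
        exact hbS (by rw [hS, mem_filter]; exact ⟨mem_univ _, h⟩)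
      have hbv : (b : ℕ) = c.val - 1 := rfl
      have heq : countLe b = (univ.filter fun v => peak (P v) < c).card := by
        apply congrArg Finset.card
        apply filter_congr
        intro v _
        simp only [eq_iff_iff, Fin.le_def, Fin.lt_def, hbv]
        omega
      have hblt' : ¬ (n ≤ 2 * (univ.filter fun v => peak (P v) < c).card) := heq ▸ hblt
      omega
  refine ⟨c, fun c' hne => ?_⟩
  have hcard : ∀ a b : Fin (m+1), (Nat.card {v : V // Prefers (P v) a b}) =
      (univ.filter fun v => Prefers (P v) a b).card := by
    intro a b
    simp [Nat.card_eq_fintype_card, Fintype.card_subtype]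
  have hABsplit : (univ.filter fun v => Prefers (P v) c c').card
      + (univ.filter fun v => Prefers (P v) c' c).card = n := by
    have h := Finset.card_filter_add_card_filter_not
      (s := (univ : Finset V)) (p := fun v => Prefers (P v) c c')
    have hcongr : (univ.filter fun v => ¬ Prefers (P v) c c')
        = (univ.filter fun v => Prefers (P v) c' c) := by
      apply filter_congr
      intro v _
      unfold Prefers
      constructor
      · intro h'
        exact lt_of_le_of_ne (not_lt.mp h') ((P v).injective.ne hne)
      · intro h'
        exact not_lt.mpr h'.le
    rw [hcongr] at h
    simpa [Finset.card_univ] using h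
  have hkey : n ≤ 2 * (univ.filter fun v => Prefers (P v) c c').card := by
    rcases hne.lt_or_gt with hlt | hlt
    · -- c' < c : voters with peak ≥ c prefer c to c'
      have hsub : (univ.filter fun v => c ≤ peak (P v))
          ⊆ (univ.filter fun v => Prefers (P v) c c') := by
        intro v hv
        rw [mem_filter] at hv ⊢
        exact ⟨mem_univ _, sp_pref_left (hsp v) hv.2 hlt⟩
      have := Finset.card_le_card hsub
      omega
    · -- c < c' : voters with peak ≤ c prefer c to c'
      have hsub : (univ.filter fun v => peak (P v) ≤ c)
          ⊆ (univ.filter fun v => Prefers (P v) c c') := by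
        intro v hv
        rw [mem_filter] at hv ⊢
        exact ⟨mem_univ _, sp_pref_right (hsp v) hv.2 hlt⟩
      have := Finset.card_le_card hsub
      have hc1' : n ≤ 2 * (univ.filter fun v => peak (P v) ≤ c).card := hc1
      omega
  unfold pop
  rw [hcard, hcard]
  have hB : (univ.filter fun v => Prefers (P v) c' c).card
      ≤ (univ.filter fun v => Prefers (P v) c c').card := by omega
  exact sub_nonpos.mpr (by exact_mod_cast hB)

lemma pop_antisymm {V : Type*} [Fintype V] {m : ℕ} (P : V → Ranking m) (a b : Fin m) :
    pop P a b = - pop P b a := by unfold pop; ring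

lemma mmc_le_zero_iff {V : Type*} [Fintype V] {m : ℕ} (P : V → Ranking m) (c : Fin m) :
    mmc P c ≤ (0 : WithBot ℤ) ↔ ∀ c' : Fin m, c' ≠ c → pop P c' c ≤ 0 := by
  unfold mmc
  rw [Finset.sup_le_iff]
  constructor
  · intro h c' hc'
    have := h c' (mem_erase.mpr ⟨hc', mem_univ _⟩)
    exact_mod_cast this
  · intro h c' hc'
    have := h c' (mem_erase.mp hc').1
    exact_mod_cast this

lemma le_mmc {V : Type*} [Fintype V] {m : ℕ} (P : V → Ranking m) {c c' : Fin m}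
    (h : c' ≠ c) : ((pop P c' c : ℤ) : WithBot ℤ) ≤ mmc P c := by
  unfold mmc
  exact Finset.le_sup (f := fun c' => ((pop P c' c : ℤ) : WithBot ℤ))
    (mem_erase.mpr ⟨h, mem_univ _⟩)

/-- in a single-peaked profile the candidates of minimal MMC score
are exactly the weak Condorcet winners; a candidate has MMC score ≤ 0 iff it is
a weak Condorcet winner, and such a candidate exists. -/
theorem stmt_10 {V : Type*} [Fintype V] {m : ℕ} (P : V → Ranking (m + 1))
    (hsp : SPProfile P) :
    (∀ c : Fin (m + 1),
      (∀ c' : Fin (m + 1), mmc P c ≤ mmc P c') ↔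
        (∀ c' : Fin (m + 1), c' ≠ c → pop P c' c ≤ 0)) ∧
    (∀ c : Fin (m + 1),
      mmc P c ≤ (0 : WithBot ℤ) ↔ (∀ c' : Fin (m + 1), c' ≠ c → pop P c' c ≤ 0)) ∧
    (∃ c : Fin (m + 1), ∀ c' : Fin (m + 1), c' ≠ c → pop P c' c ≤ 0) := by
  obtain ⟨w, hw⟩ := exists_weakCW P hsp
  refine ⟨?_, fun c => mmc_le_zero_iff P c, ⟨w, hw⟩⟩
  intro c
  constructor
  · intro h
    exact (mmc_le_zero_iff P c).mp (le_trans (h w) ((mmc_le_zero_iff P w).mpr hw))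
  · intro h c'
    by_cases hcc : c' = c
    · rw [hcc]
    · have h1 : mmc P c ≤ 0 := (mmc_le_zero_iff P c).mpr h
      have h2 : (0 : ℤ) ≤ pop P c c' := by
        rw [pop_antisymm]
        exact neg_nonneg.mpr (h c' hcc)
      calc mmc P c ≤ 0 := h1
        _ ≤ ((pop P c c' : ℤ) : WithBot ℤ) := by exact_mod_cast h2
        _ ≤ mmc P c' := le_mmc P (Ne.symm hcc)
end

section
/- For every single-peaked profile there exists a ranking of the candidates in non-decreasing order of Minimax Condorcet score that is itself single-peaked with respect to the same axis. Equivalently, the MMC score function has no strict interior dip: there is no index i with mmc(c_{i−1}) < mmc(c_i) and mmc(c_{i+1}) < mmc(c_i). -/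
open Finset

lemma card_mono_pred {V : Type*} [Fintype V] (A B : V → Prop) (h : ∀ v, A v → B v) :
    Nat.card {v // A v} ≤ Nat.card {v // B v} :=
  Nat.card_le_card_of_injective (fun x => ⟨x.1, h x.1 x.2⟩)
    (fun x y hxy => by apply Subtype.ext; simpa [Subtype.ext_iff] using hxy)

lemma pop_mono {V : Type*} [Fintype V] {m : ℕ} (P : V → Ranking m) {a b c d : Fin m}
    (h1 : ∀ v, Prefers (P v) a b → Prefers (P v) c d)
    (h2 : ∀ v, Prefers (P v) d c → Prefers (P v) b a) :
    pop P a b ≤ pop P c d := by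
  unfold pop
  have t1 : Nat.card {v // Prefers (P v) a b} ≤ Nat.card {v // Prefers (P v) c d} :=
    card_mono_pred _ _ h1
  have t2 : Nat.card {v // Prefers (P v) d c} ≤ Nat.card {v // Prefers (P v) b a} :=
    card_mono_pred _ _ h2
  omega

lemma prefers_chain_left {m : ℕ} {r : Ranking m} (h : IsSinglePeaked r)
    {a b c d : Fin m} (hab : a < b) (hbc : b ≤ c) (hcd : c < d) :
    Prefers r a b → Prefers r c d := by
  intro hp
  rcases eq_or_lt_of_le hbc with rfl | hbc'
  · exact (h a b d hab hcd).1 hp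
  · exact (h b c d hbc' hcd).1 ((h a b c hab hbc').1 hp)

lemma prefers_chain_right {m : ℕ} {r : Ranking m} (h : IsSinglePeaked r)
    {a b c d : Fin m} (hab : a < b) (hbc : b ≤ c) (hcd : c < d) :
    Prefers r d c → Prefers r b a := by
  intro hp
  rcases eq_or_lt_of_le hbc with rfl | hbc'
  · exact (h a b d hab hcd).2 hp
  · exact (h a b c hab hbc').2 ((h b c d hbc' hcd).2 hp)

lemma mmc_quasiconvex {V : Type*} [Fintype V] {m : ℕ} (P : V → Ranking m)
    (hsp : SPProfile P) {i j k : Fin m} (hij : i < j) (hjk : j < k) :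
    mmc P j ≤ max (mmc P i) (mmc P k) := by
  apply Finset.sup_le
  intro c hc
  rw [Finset.mem_erase] at hc
  rcases lt_or_gt_of_ne hc.1 with hcj | hjc
  · -- c < j : bound by pop (k-1) k ≤ mmc k
    have hk1 : (k : ℕ) - 1 < m := by omega
    set kk : Fin m := ⟨(k : ℕ) - 1, hk1⟩ with hkk
    have hjkk : j ≤ kk := by
      rw [Fin.le_def]
      have := Fin.lt_def.mp hjk
      simp [hkk]; omega
    have hkkk : kk < k := by
      rw [Fin.lt_def]
      have h1 : (0:ℕ) < (k:ℕ) := by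
        have := Fin.lt_def.mp hij; have := Fin.lt_def.mp hjk; omega
      simp [hkk]; omega
    have hpop : pop P c j ≤ pop P kk k :=
      pop_mono P (fun v => prefers_chain_left (hsp v) hcj hjkk hkkk)
        (fun v => prefers_chain_right (hsp v) hcj hjkk hkkk)
    calc ((pop P c j : ℤ) : WithBot ℤ) ≤ ((pop P kk k : ℤ) : WithBot ℤ) :=
          WithBot.coe_le_coe.mpr hpop
      _ ≤ mmc P k := by
          unfold mmc
          exact Finset.le_sup (f := fun c' => ((pop P c' k : ℤ) : WithBot ℤ)) (Finset.mem_erase.mpr ⟨Fin.ne_of_lt hkkk, Finset.mem_univ _⟩)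
      _ ≤ max (mmc P i) (mmc P k) := le_max_right _ _
  · -- j < c : bound by pop (i+1) i ≤ mmc i
    have hi1 : (i : ℕ) + 1 < m := by
      have := Fin.lt_def.mp hij; have := j.isLt; omega
    set ii : Fin m := ⟨(i : ℕ) + 1, hi1⟩ with hii
    have hiii : i < ii := by rw [Fin.lt_def]; simp [hii]
    have hiij : ii ≤ j := by
      rw [Fin.le_def]; have := Fin.lt_def.mp hij; simp [hii]; omega
    have hpop : pop P c j ≤ pop P ii i :=
      pop_mono P (fun v => prefers_chain_right (hsp v) hiii hiij hjc)
        (fun v => prefers_chain_left (hsp v) hiii hiij hjc)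
    calc ((pop P c j : ℤ) : WithBot ℤ) ≤ ((pop P ii i : ℤ) : WithBot ℤ) :=
          WithBot.coe_le_coe.mpr hpop
      _ ≤ mmc P i := by
          unfold mmc
          exact Finset.le_sup (f := fun c' => ((pop P c' i : ℤ) : WithBot ℤ)) (Finset.mem_erase.mpr ⟨Fin.ne_of_gt hiii, Finset.mem_univ _⟩)
      _ ≤ max (mmc P i) (mmc P k) := le_max_left _ _

lemma exists_sp_ranking {m : ℕ} (f : Fin m → WithBot ℤ)
    (hqc : ∀ i j k : Fin m, i < j → j < k → f j ≤ max (f i) (f k)) :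
    ∃ r : Ranking m, IsSinglePeaked r ∧ ∀ a b : Fin m, r a ≤ r b → f a ≤ f b := by
  classical
  -- tie-breaking secondary key
  set g : Fin m → ℤ := fun c => if ∃ c', c < c' ∧ f c' < f c then -(c:ℤ) else (c:ℤ) with hg
  set K : Fin m → (WithBot ℤ) ×ₗ ℤ := fun c => toLex (f c, g c) with hK
  have ginj : Function.Injective g := by
    intro a b hab
    simp only [hg] at hab
    split_ifs at hab <;> (apply Fin.ext; omega)
  have Kinj : Function.Injective K := by
    intro a b hab
    simp only [hK] at hab
    exact ginj (congrArg (fun p => (ofLex p).2) hab)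
  -- no interior peak for K
  have noPeak : ∀ i j k : Fin m, i < j → j < k → ¬ (K i < K j ∧ K k < K j) := by
    intro i j k hij hjk ⟨h1, h2⟩
    simp only [hK, Prod.Lex.lt_iff, ofLex_toLex] at h1 h2
    rcases h1 with h1 | ⟨he1, hg1⟩
    · rcases h2 with h2 | ⟨he2, hg2⟩
      · -- f i < f j, f k < f j
        exact absurd (hqc i j k hij hjk) (not_le.mpr (max_lt h1 h2))
      · -- f i < f j, f k = f j, g k < g j
        have hgj : g j = (j:ℤ) := by
          rw [hg]; simp only
          rw [if_neg]
          rintro ⟨x, hjx, hfx⟩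
          have := hqc i j x hij hjx
          simp [le_max_iff] at this
          rcases this with h | h
          · exact absurd h (not_le.mpr h1)
          · exact absurd h (not_le.mpr hfx)
        have hgk : g k = (k:ℤ) := by
          rw [hg]; simp only
          rw [if_neg]
          rintro ⟨x, hkx, hfx⟩
          rw [he2] at hfx
          have := hqc i k x (hij.trans hjk) hkx
          simp [le_max_iff] at this
          rcases this with h | h
          · rw [he2] at h; exact absurd h (not_le.mpr h1)
          · rw [he2] at h; exact absurd h (not_le.mpr hfx)
        rw [hgj, hgk] at hg2
        exact absurd hg2 (by exact_mod_cast not_lt.mpr (le_of_lt hjk))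
    · rcases h2 with h2 | ⟨he2, hg2⟩
      · -- f i = f j, g i < g j, f k < f j
        have hgi : g i = -(i:ℤ) := by
          rw [hg]; simp only
          rw [if_pos]; exact ⟨k, hij.trans hjk, by rw [he1]; exact h2⟩
        have hgj : g j = -(j:ℤ) := by
          rw [hg]; simp only
          rw [if_pos]; exact ⟨k, hjk, h2⟩
        rw [hgi, hgj] at hg1
        have : (j:ℤ) < (i:ℤ) := by omega
        exact absurd this (by exact_mod_cast not_lt.mpr (le_of_lt hij))
      · -- f i = f j = f k, g i < g j, g k < g j
        by_cases hx : ∃ x, j < x ∧ f x < f j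
        · obtain ⟨x, hjx, hfx⟩ := hx
          have hgj : g j = -(j:ℤ) := by rw [hg]; simp only; rw [if_pos]; exact ⟨x, hjx, hfx⟩
          have hgi : g i = -(i:ℤ) := by
            rw [hg]; simp only
            rw [if_pos]; exact ⟨x, hij.trans hjx, by rw [he1]; exact hfx⟩
          rw [hgi, hgj] at hg1
          have : (j:ℤ) < (i:ℤ) := by omega
          exact absurd this (by exact_mod_cast not_lt.mpr (le_of_lt hij))
        · have hgj : g j = (j:ℤ) := by rw [hg]; simp only; rw [if_neg hx]
          have hgk : g k = (k:ℤ) := by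
            rw [hg]; simp only
            rw [if_neg]
            rintro ⟨x, hkx, hfx⟩
            exact hx ⟨x, hjk.trans hkx, by rw [← he2]; exact hfx⟩
          rw [hgj, hgk] at hg2
          exact absurd hg2 (by exact_mod_cast not_lt.mpr (le_of_lt hjk))
  -- sort by K
  set σ : Equiv.Perm (Fin m) := Tuple.sort K with hσ
  have hsm : StrictMono (K ∘ σ) :=
    (Tuple.monotone_sort K).strictMono_of_injective (Kinj.comp σ.injective)
  refine ⟨σ.symm, ?_, ?_⟩
  · -- single-peaked
    have key : ∀ a b : Fin m, σ.symm a < σ.symm b ↔ K a < K b := by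
      intro a b
      rw [← hsm.lt_iff_lt]
      simp [Function.comp]
    intro i j k hij hjk
    constructor
    · intro hp
      rw [Prefers, key] at hp ⊢
      rcases lt_trichotomy (K j) (K k) with h | h | h
      · exact h
      · exact absurd (Kinj h.symm) (Fin.ne_of_lt hjk).symm
      · exact absurd ⟨hp, h⟩ (noPeak i j k hij hjk)
    · intro hp
      rw [Prefers, key] at hp ⊢
      rcases lt_trichotomy (K j) (K i) with h | h | h
      · exact h
      · exact absurd (Kinj h.symm) (Fin.ne_of_lt hij)
      · exact absurd ⟨h, hp⟩ (noPeak i j k hij hjk)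
  · -- monotone in f
    intro a b hab
    rcases eq_or_ne a b with rfl | hne
    · exact le_refl _
    · have hlt : σ.symm a < σ.symm b := lt_of_le_of_ne hab (fun h => hne (σ.symm.injective h))
      have hK' : K a < K b := by
        have := hsm hlt
        simpa [Function.comp] using this
      simp only [hK, Prod.Lex.lt_iff] at hK'
      rcases hK' with h | ⟨he, _⟩
      · exact le_of_lt h
      · exact le_of_eq he

/-- for every single-peaked profile there is a single-peaked
ranking ordering the candidates by non-decreasing MMC score; equivalently the
MMC score has no strict interior dip along the axis. -/
theorem stmt_11 {V : Type*} [Fintype V] {m : ℕ} (P : V → Ranking m)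
    (hsp : SPProfile P) :
    (∃ r : Ranking m, IsSinglePeaked r ∧
      ∀ a b : Fin m, r a ≤ r b → mmc P a ≤ mmc P b) ∧
    ∀ i : Fin m, ∀ (h1 : 0 < (i : ℕ)) (h2 : (i : ℕ) + 1 < m),
      ¬ (mmc P ⟨(i : ℕ) - 1, by omega⟩ < mmc P i ∧
          mmc P ⟨(i : ℕ) + 1, h2⟩ < mmc P i) := by
  have hqc : ∀ i j k : Fin m, i < j → j < k → mmc P j ≤ max (mmc P i) (mmc P k) :=
    fun i j k hij hjk => mmc_quasiconvex P hsp hij hjk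
  constructor
  · exact exists_sp_ranking (mmc P) hqc
  · rintro i h1 h2 ⟨ha, hb⟩
    have hi1 : (⟨(i : ℕ) - 1, by omega⟩ : Fin m) < i := by
      rw [Fin.lt_def]; simp; omega
    have hi2 : i < (⟨(i : ℕ) + 1, h2⟩ : Fin m) := by
      rw [Fin.lt_def]; simp
    have hq := hqc _ i _ hi1 hi2
    exact absurd hq (not_le.mpr (max_lt ha hb))
end

section
/- Consider a network G = (V, E) where each voter holds a ranking of m candidates, and updates where a voter replaces their ranking by one minimising the sum of Kendall tau distances to the rankings of their neighbours (keeping their old ranking if it is among the minimisers). Every sequence of such Kemeny updates in which each update strictly changes some voter's opinion has length at most |E| · C(m,2). -/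
open Finset

lemma kt_comm {m : ℕ} (r s : Ranking m) : kt r s = kt s r := by
  unfold kt
  exact Nat.card_congr (Equiv.subtypeEquivRight fun p => by tauto)

lemma card_lt_pairs (m : ℕ) :
    Nat.card {p : Fin m × Fin m // p.1 < p.2} = m.choose 2 := by
  have e : {p : Fin m × Fin m // p.1 < p.2} ≃ Σ j : Fin m, Fin j.val :=
    { toFun := fun p => ⟨p.1.2, ⟨p.1.1, p.2⟩⟩
      invFun := fun x => ⟨(⟨x.2.1, x.2.2.trans x.1.2⟩, x.1), x.2.2⟩
      left_inv := fun p => rfl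
      right_inv := fun x => rfl }
  rw [Nat.card_congr e, Nat.card_eq_fintype_card, Fintype.card_sigma]
  simp only [Fintype.card_fin]
  rw [Fin.sum_univ_eq_sum_range (fun i => i) m, Finset.sum_range_id, Nat.choose_two_right]

lemma kt_le {m : ℕ} (r s : Ranking m) : kt r s ≤ m.choose 2 := by
  rw [← card_lt_pairs m]
  unfold kt
  exact Nat.card_le_card_of_injective
    (fun x => ⟨x.1, x.2.1⟩) (fun x y h => Subtype.ext (Subtype.mk_eq_mk.mp h))

/-- The potential function: sum over ordered adjacent pairs of Kendall tau distances. -/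
noncomputable def Phi {V : Type*} [Fintype V] [DecidableEq V] {m : ℕ}
    (G : SimpleGraph V) [DecidableRel G.Adj] (P : V → Ranking m) : ℕ :=
  ∑ v, ∑ u ∈ G.neighborFinset v, kt (P v) (P u)

lemma Phi_decomp {V : Type*} [Fintype V] [DecidableEq V] {m : ℕ}
    (G : SimpleGraph V) [DecidableRel G.Adj] (f : V → Ranking m) (a : V) :
    Phi G f = (∑ u ∈ G.neighborFinset a, kt (f a) (f u))
      + (∑ v ∈ G.neighborFinset a, kt (f v) (f a))
      + ∑ v ∈ Finset.univ.erase a, ∑ u ∈ (G.neighborFinset v).erase a, kt (f v) (f u) := by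
  classical
  have ha : a ∉ G.neighborFinset a := by
    simp [SimpleGraph.mem_neighborFinset]
  rw [Phi, ← Finset.add_sum_erase Finset.univ _ (Finset.mem_univ a)]
  have h1 : ∀ v ∈ Finset.univ.erase a,
      ∑ u ∈ G.neighborFinset v, kt (f v) (f u)
        = (if a ∈ G.neighborFinset v then kt (f v) (f a) else 0)
          + ∑ u ∈ (G.neighborFinset v).erase a, kt (f v) (f u) := by
    intro v _
    by_cases hav : a ∈ G.neighborFinset v
    · rw [if_pos hav]
      exact (Finset.add_sum_erase _ (fun u => kt (f v) (f u)) hav).symm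
    · rw [if_neg hav, Finset.erase_eq_of_notMem hav, zero_add]
  rw [Finset.sum_congr rfl h1, Finset.sum_add_distrib]
  have h2 : ∑ v ∈ Finset.univ.erase a,
      (if a ∈ G.neighborFinset v then kt (f v) (f a) else 0)
      = ∑ v ∈ G.neighborFinset a, kt (f v) (f a) := by
    rw [Finset.sum_erase _ (by simp [ha])]
    rw [← Finset.sum_filter]
    congr 1
    ext v
    simp [SimpleGraph.mem_neighborFinset, SimpleGraph.adj_comm]
  rw [h2]
  ring

lemma step_decrease {V : Type*} [Fintype V] [DecidableEq V] {m : ℕ}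
    (G : SimpleGraph V) [DecidableRel G.Adj] (f g : V → Ranking m) (a : V)
    (hfix : ∀ u : V, u ≠ a → g u = f u)
    (hlt : ∑ u ∈ G.neighborFinset a, kt (g a) (f u) <
      ∑ u ∈ G.neighborFinset a, kt (f a) (f u)) :
    Phi G g + 2 ≤ Phi G f := by
  classical
  have hne : ∀ u ∈ G.neighborFinset a, u ≠ a := by
    intro u hu
    rintro rfl
    simp [SimpleGraph.mem_neighborFinset] at hu
  rw [Phi_decomp G g a, Phi_decomp G f a]
  have e1 : ∑ u ∈ G.neighborFinset a, kt (g a) (g u)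
      = ∑ u ∈ G.neighborFinset a, kt (g a) (f u) :=
    Finset.sum_congr rfl fun u hu => by rw [hfix u (hne u hu)]
  have e2 : ∑ v ∈ G.neighborFinset a, kt (g v) (g a)
      = ∑ u ∈ G.neighborFinset a, kt (g a) (f u) :=
    Finset.sum_congr rfl fun u hu => by rw [hfix u (hne u hu), kt_comm]
  have e3 : ∑ v ∈ G.neighborFinset a, kt (f v) (f a)
      = ∑ u ∈ G.neighborFinset a, kt (f a) (f u) :=
    Finset.sum_congr rfl fun u hu => by rw [kt_comm]
  have e4 : ∑ v ∈ Finset.univ.erase a, ∑ u ∈ (G.neighborFinset v).erase a, kt (g v) (g u)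
      = ∑ v ∈ Finset.univ.erase a, ∑ u ∈ (G.neighborFinset v).erase a, kt (f v) (f u) := by
    refine Finset.sum_congr rfl fun v hv => Finset.sum_congr rfl fun u hu => ?_
    rw [hfix v (Finset.ne_of_mem_erase hv), hfix u (Finset.ne_of_mem_erase hu)]
  rw [e1, e2, e3, e4]
  omega

lemma Phi_le {V : Type*} [Fintype V] [DecidableEq V] {m : ℕ}
    (G : SimpleGraph V) [DecidableRel G.Adj] (f : V → Ranking m) :
    Phi G f ≤ 2 * (G.edgeFinset.card * m.choose 2) := by
  classical
  have h1 : Phi G f ≤ ∑ v : V, G.degree v * m.choose 2 := by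
    refine Finset.sum_le_sum fun v _ => ?_
    calc ∑ u ∈ G.neighborFinset v, kt (f v) (f u)
        ≤ ∑ _u ∈ G.neighborFinset v, m.choose 2 :=
          Finset.sum_le_sum fun u _ => kt_le _ _
      _ = G.degree v * m.choose 2 := by
          rw [Finset.sum_const, smul_eq_mul, SimpleGraph.card_neighborFinset_eq_degree]
  calc Phi G f ≤ ∑ v : V, G.degree v * m.choose 2 := h1
    _ = (∑ v : V, G.degree v) * m.choose 2 := by rw [Finset.sum_mul]
    _ = 2 * (G.edgeFinset.card * m.choose 2) := by
        rw [G.sum_degrees_eq_twice_card_edges]; ring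

/-- any sequence of Kemeny updates in a network in which every
update strictly changes the active voter's opinion has length at most
|E| · C(m,2). -/
theorem stmt_12 {V : Type*} [Fintype V] [DecidableEq V] {m : ℕ}
    (G : SimpleGraph V) [DecidableRel G.Adj]
    (T : ℕ) (S : Fin (T + 1) → V → Ranking m)
    (hstep : ∀ t : Fin T, ∃ v : V,
      (∀ u : V, u ≠ v → S t.succ u = S t.castSucc u) ∧
      S t.succ v ≠ S t.castSucc v ∧
      (∀ σ : Ranking m,
        ∑ u ∈ G.neighborFinset v, kt (S t.succ v) (S t.castSucc u) ≤
          ∑ u ∈ G.neighborFinset v, kt σ (S t.castSucc u)) ∧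
      ∑ u ∈ G.neighborFinset v, kt (S t.succ v) (S t.castSucc u) <
        ∑ u ∈ G.neighborFinset v, kt (S t.castSucc v) (S t.castSucc u)) :
    T ≤ G.edgeFinset.card * Nat.choose m 2 := by
  classical
  have key : ∀ n : ℕ, ∀ h : n ≤ T,
      Phi G (S ⟨n, Nat.lt_succ_of_le h⟩) + 2 * n ≤ Phi G (S ⟨0, Nat.succ_pos T⟩) := by
    intro n
    induction n with
    | zero => intro h; simp
    | succ n ih =>
      intro h
      have hn : n < T := h
      obtain ⟨a, hfix, _, _, hlt⟩ := hstep ⟨n, hn⟩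
      have hcs : (⟨n, hn⟩ : Fin T).castSucc = ⟨n, Nat.lt_succ_of_le (Nat.le_of_lt hn)⟩ := rfl
      have hsc : (⟨n, hn⟩ : Fin T).succ = ⟨n + 1, Nat.lt_succ_of_le h⟩ := rfl
      rw [hcs] at hfix hlt
      rw [hsc] at hfix hlt
      have hdec := step_decrease G (S ⟨n, Nat.lt_succ_of_le (Nat.le_of_lt hn)⟩)
        (S ⟨n + 1, Nat.lt_succ_of_le h⟩) a hfix hlt
      have := ih (Nat.le_of_lt hn)
      omega
  have h1 := key T le_rfl
  have h2 := Phi_le G (S ⟨0, Nat.succ_pos T⟩)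
  omega
end
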